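/- Let M = (x y; z w) ∈ SL₂(ℤ) with z ≠ 0, trace x + w > 2, and x > 0. Define n_M := (x+w)/z − sign(z)(3 + 12 s(w,|z|)). Then for M' = (3 −1; 1 0)·M, one has n_M = n_{M'}. -/

import Mathlib

/-- The sawtooth function ((y)) : y - ⌊y⌋ - 1/2 if y ∉ ℤ, and 0 if y ∈ ℤ. -/
noncomputable def sawtooth (y : ℚ) : ℚ := if y.den = 1 then 0 else y - ⌊y⌋ - 1/2

/-- The Dedekind sum s(h,k) = Σ_{m=1}^{k} ((hm/k))((m/k)). -/
noncomputable def dedekindS (h : ℤ) (k : ℕ) : ℚ :=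
  ∑ m ∈ Finset.Icc 1 k, sawtooth ((h * m : ℤ) / (k : ℚ)) * sawtooth ((m : ℚ) / (k : ℚ))

/-- For M = (x y; z w) with z ≠ 0, n_M = (x+w)/z - sign(z)(3 + 12 s(w,|z|)). -/
noncomputable def nMat (M : Matrix (Fin 2) (Fin 2) ℤ) : ℚ :=
  ((M 0 0 + M 1 1 : ℤ) : ℚ) / ((M 1 0 : ℤ) : ℚ)
    - (Int.sign (M 1 0) : ℚ) * (3 + 12 * dedekindS (M 1 1) (M 1 0).natAbs)

open Finset

lemma sum_Ico_id' (k : ℕ) : (∑ m ∈ Ico 1 k, (m : ℤ)) * 2 = k * (k - 1) := by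
  induction k with
  | zero => simp
  | succ n ih =>
    rcases Nat.eq_zero_or_pos n with h | h
    · subst h; simp
    · rw [Finset.sum_Ico_succ_top h]
      push_cast
      push_cast at ih
      ring_nf
      ring_nf at ih
      linarith

lemma sum_Ico_sq' (k : ℕ) : (∑ m ∈ Ico 1 k, (m : ℤ)^2) * 6 = k * (k - 1) * (2*k - 1) := by
  induction k with
  | zero => simp
  | succ n ih =>
    rcases Nat.eq_zero_or_pos n with h | h
    · subst h; simp
    · rw [Finset.sum_Ico_succ_top h]
      push_cast
      push_cast at ih
      ring_nf
      ring_nf at ih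
      linarith

lemma emod_mem_aux {h h' : ℤ} {k : ℕ} (hinv : h * h' ≡ 1 [ZMOD (k:ℤ)])
    {m : ℕ} (hm : m ∈ Ico 1 k) : ((h * m) % (k:ℤ)).toNat ∈ Ico 1 k ∧
      (((h * m) % (k:ℤ)).toNat : ℤ) = (h * m) % (k:ℤ) := by
  simp only [mem_Ico] at hm ⊢
  have hk : (0:ℤ) < (k:ℤ) := by exact_mod_cast Nat.pos_of_ne_zero (by omega)
  have h0 : 0 ≤ (h * m) % (k:ℤ) := Int.emod_nonneg _ (by positivity)
  have h1 : (h * m) % (k:ℤ) < k := Int.emod_lt_of_pos _ hk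
  have hne : (h * m) % (k:ℤ) ≠ 0 := by
    intro hdvd
    have hd : (k:ℤ) ∣ h * m := Int.dvd_of_emod_eq_zero hdvd
    have : (k:ℤ) ∣ m := by
      have h2 : (k:ℤ) ∣ h' * (h * m) := hd.mul_left h'
      have h3 : h' * (h * m) ≡ 1 * m [ZMOD (k:ℤ)] := by
        calc h' * (h * m) = (h * h') * m := by ring
        _ ≡ 1 * m [ZMOD (k:ℤ)] := hinv.mul_right m
      have h4 : (h' * (h * m)) % (k:ℤ) = 0 := Int.emod_eq_zero_of_dvd h2
      have h5 : ((m:ℤ)) % (k:ℤ) = 0 := by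
        have h6 : (h' * (h * ↑m)) % (k:ℤ) = (1 * ↑m) % (k:ℤ) := h3
        rw [h4, one_mul] at h6
        omega
      exact Int.dvd_of_emod_eq_zero h5
    have := Int.le_of_dvd (by exact_mod_cast hm.1) this
    omega
  omega

lemma sum_emod_perm {h h' : ℤ} {k : ℕ} (hinv : h * h' ≡ 1 [ZMOD (k:ℤ)]) (F : ℤ → ℤ) :
    ∑ m ∈ Ico 1 k, F ((h * m) % (k:ℤ)) = ∑ m ∈ Ico 1 k, F m := by
  have hinv' : h' * h ≡ 1 [ZMOD (k:ℤ)] := by rwa [mul_comm] at hinv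
  have key : ∀ (a b : ℤ), a * b ≡ 1 [ZMOD (k:ℤ)] → ∀ m ∈ Ico 1 k,
      (b * (((a * m) % (k:ℤ)).toNat : ℤ)) % (k:ℤ) = m := by
    intro a b hab m hm
    rw [(emod_mem_aux hab hm).2]
    have h0 : ((a * m) % (k:ℤ)) ≡ a * m [ZMOD (k:ℤ)] := Int.emod_emod_of_dvd _ dvd_rfl
    have h1 : b * ((a * m) % (k:ℤ)) ≡ b * (a * m) [ZMOD (k:ℤ)] := h0.mul_left b
    have h2 : b * (a * m) ≡ 1 * m [ZMOD (k:ℤ)] := by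
      calc b * (a * m) = (a * b) * m := by ring
      _ ≡ 1 * m [ZMOD (k:ℤ)] := hab.mul_right m
    have h3 : b * ((a * m) % (k:ℤ)) ≡ m [ZMOD (k:ℤ)] := h1.trans (by simpa using h2)
    have hm' : m ∈ Ico 1 k := hm
    simp only [mem_Ico] at hm'
    rw [Int.ModEq] at h3
    rw [h3, Int.emod_eq_of_lt (by exact_mod_cast Nat.zero_le m) (by exact_mod_cast hm'.2)]
  refine Finset.sum_nbij' (i := fun m => ((h * m) % (k:ℤ)).toNat)
    (j := fun m => ((h' * m) % (k:ℤ)).toNat) ?_ ?_ ?_ ?_ ?_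
  · intro m hm; exact (emod_mem_aux hinv hm).1
  · intro m hm; exact (emod_mem_aux hinv' hm).1
  · intro m hm
    have := key h h' hinv m hm
    omega
  · intro m hm
    have := key h' h hinv' m hm
    omega
  · intro m hm
    congr 1
    exact ((emod_mem_aux hinv hm).2).symm

lemma sawtooth_int_div (a : ℤ) (k : ℕ) (hk : 0 < k) (hnd : ¬ (k:ℤ) ∣ a) :
    sawtooth ((a : ℚ) / (k:ℚ)) = ((a % (k:ℤ) : ℤ) : ℚ) / k - 1/2 := by
  have hk' : (0:ℚ) < (k:ℚ) := by exact_mod_cast hk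
  have hden : ((a:ℚ) / (k:ℚ)).den ≠ 1 := by
    have hcast : ((k:ℕ):ℚ) = (((k:ℤ)):ℚ) := by norm_cast
    rw [hcast, Ne, Rat.den_div_intCast_eq_one_iff a k (by exact_mod_cast hk.ne')]
    exact hnd
  have hr0 : 0 < a % (k:ℤ) := by
    have := Int.emod_nonneg a (by exact_mod_cast hk.ne' : ((k:ℤ)) ≠ 0)
    rcases this.lt_or_eq with h | h
    · exact h
    · exact absurd (Int.dvd_of_emod_eq_zero h.symm) hnd
  have hr1 : a % (k:ℤ) < k := Int.emod_lt_of_pos a (by exact_mod_cast hk)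
  have hdecomp : a = (k:ℤ) * (a / (k:ℤ)) + a % (k:ℤ) := (Int.mul_ediv_add_emod a k).symm
  have hdQ : (a:ℚ) = (k:ℚ) * ((a / (k:ℤ) : ℤ) : ℚ) + ((a % (k:ℤ) : ℤ) : ℚ) := by
    exact_mod_cast congrArg (fun t : ℤ => (t : ℚ)) hdecomp
  have hr0Q : (0:ℚ) < ((a % (k:ℤ) : ℤ) : ℚ) := by exact_mod_cast hr0
  have hr1Q : ((a % (k:ℤ) : ℤ) : ℚ) < (k:ℚ) := by exact_mod_cast hr1
  have hfl : ⌊(a:ℚ) / (k:ℚ)⌋ = a / (k:ℤ) := by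
    rw [Int.floor_eq_iff]
    constructor
    · rw [le_div_iff₀ hk']
      nlinarith
    · rw [div_lt_iff₀ hk']
      nlinarith
  rw [sawtooth, if_neg hden, hfl]
  field_simp
  linarith [hdQ]

lemma not_dvd_mul_of_inv {h h' : ℤ} {k : ℕ} (hinv : h * h' ≡ 1 [ZMOD (k:ℤ)])
    {m : ℕ} (hm : m ∈ Ico 1 k) : ¬ (k:ℤ) ∣ h * m := by
  intro hd
  have h2 := (emod_mem_aux hinv hm).1
  rw [Int.emod_eq_zero_of_dvd hd] at h2
  simp at h2

lemma dedekindS_eq {h h' : ℤ} {k : ℕ} (hk : 0 < k) (hinv : h * h' ≡ 1 [ZMOD (k:ℤ)]) :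
    dedekindS h k =
      ((∑ m ∈ Ico 1 k, (m:ℤ) * ((h * m) % (k:ℤ)) : ℤ) : ℚ) / (k:ℚ)^2 - ((k:ℚ)-1)/4 := by
  have hkQ : (0:ℚ) < (k:ℚ) := by exact_mod_cast hk
  have step1 : dedekindS h k
      = ∑ m ∈ Ico 1 k, ((((h*m) % (k:ℤ) : ℤ):ℚ)/k - 1/2) * (((m:ℤ):ℚ)/k - 1/2) := by
    rw [dedekindS, ← Finset.Ico_add_one_right_eq_Icc, Finset.sum_Ico_succ_top (by omega)]
    have hlast : sawtooth ((k:ℚ) / (k:ℚ)) = 0 := by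
      rw [div_self hkQ.ne']
      simp [sawtooth]
    rw [hlast, mul_zero, add_zero]
    refine Finset.sum_congr rfl fun m hm => ?_
    have hm' := hm
    simp only [mem_Ico] at hm'
    have e1 : sawtooth ((h * m : ℤ) / (k : ℚ)) = (((h*m) % (k:ℤ) : ℤ):ℚ)/k - 1/2 :=
      sawtooth_int_div (h*m) k hk (not_dvd_mul_of_inv hinv hm)
    have hnd2 : ¬ (k:ℤ) ∣ (m:ℤ) := by
      intro hd
      have := Int.le_of_dvd (by exact_mod_cast hm'.1) hd
      omega
    have e2 : sawtooth ((m : ℚ) / (k : ℚ)) = ((((m:ℤ)) % (k:ℤ) : ℤ):ℚ)/k - 1/2 := by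
      have hc : ((m:ℕ):ℚ) = (((m:ℤ)):ℚ) := by norm_cast
      rw [hc]
      exact sawtooth_int_div (m:ℤ) k hk hnd2
    rw [e1, e2, show ((m:ℤ) % (k:ℤ)) = (m:ℤ) from Int.emod_eq_of_lt (by positivity) (by exact_mod_cast hm'.2)]
  rw [step1]
  have expand : ∀ rq mq : ℚ, (rq/k - 1/2) * (mq/k - 1/2)
      = mq*rq*(1/(k:ℚ)^2) - rq*(1/(2*k)) - mq*(1/(2*k)) + 1/4 := by
    intro rq mq; ring
  simp only [expand]
  rw [Finset.sum_add_distrib, Finset.sum_sub_distrib, Finset.sum_sub_distrib,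
    ← Finset.sum_mul, ← Finset.sum_mul, ← Finset.sum_mul, Finset.sum_const, Nat.card_Ico,
    nsmul_eq_mul]
  have hperm : (∑ m ∈ Ico 1 k, (h * m) % (k:ℤ)) = ∑ m ∈ Ico 1 k, (m:ℤ) :=
    sum_emod_perm hinv id
  have hgauss := sum_Ico_id' k
  have hsum1 : (∑ m ∈ Ico 1 k, (((h*m) % (k:ℤ) : ℤ):ℚ))
      = ((∑ m ∈ Ico 1 k, ((h * m) % (k:ℤ)) : ℤ) : ℚ) := by push_cast; ring
  have hsum2 : (∑ m ∈ Ico 1 k, ((m:ℤ):ℚ)) = ((∑ m ∈ Ico 1 k, (m:ℤ) : ℤ) : ℚ) := by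
    push_cast; ring
  have hsum3 : (∑ m ∈ Ico 1 k, ((m:ℤ):ℚ) * (((h*m) % (k:ℤ) : ℤ):ℚ))
      = ((∑ m ∈ Ico 1 k, (m:ℤ) * ((h * m) % (k:ℤ)) : ℤ) : ℚ) := by
    push_cast; ring
  rw [hsum1, hperm, hsum2, hsum3]
  have hgQ : ((∑ m ∈ Ico 1 k, (m:ℤ) : ℤ) : ℚ) * 2 = (k:ℚ) * ((k:ℚ) - 1) := by
    exact_mod_cast congrArg (fun t : ℤ => (t:ℚ)) hgauss
  have hcard : ((k - 1 : ℕ) : ℚ) = (k:ℚ) - 1 := by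
    have h1 : (1:ℕ) ≤ k := hk
    push_cast [h1]
    ring
  rw [hcard]
  have hS : ((∑ m ∈ Ico 1 k, (m:ℤ) : ℤ) : ℚ) = (k:ℚ) * ((k:ℚ)-1) / 2 := by linarith
  rw [hS]
  field_simp
  ring

lemma e3_lemma (h k : ℕ) (hh : 0 < h) (hk : 0 < k) (hco : Nat.Coprime h k) :
    ∑ m ∈ Ico 1 k, (((h:ℤ)*m)/(k:ℤ)) * (((h:ℤ)*m)/(k:ℤ) + 1)
      = ((k:ℤ)-1)*(h:ℤ)*((h:ℤ)-1) - 2 * ∑ n ∈ Ico 1 h, (n:ℤ) * (((k:ℤ)*n)/(h:ℤ)) := by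
  have hkZ : (0:ℤ) < (k:ℤ) := by exact_mod_cast hk
  have hhZ : (0:ℤ) < (h:ℤ) := by exact_mod_cast hh
  set T : ℤ := ∑ m ∈ Ico 1 k, ∑ n ∈ Ico 1 h,
    (if (k:ℤ)*n < (h:ℤ)*m then (n:ℤ) else 0) with hT
  have claimA : ∀ m ∈ Ico 1 k,
      2 * (∑ n ∈ Ico 1 h, (if (k:ℤ)*n < (h:ℤ)*m then (n:ℤ) else 0))
        = (((h:ℤ)*m)/(k:ℤ)) * ((((h:ℤ)*m)/(k:ℤ)) + 1) := by
    intro m hm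
    simp only [mem_Ico] at hm
    have hb0 : 0 ≤ ((h:ℤ)*m)/(k:ℤ) := Int.ediv_nonneg (by positivity) hkZ.le
    have hbh : ((h:ℤ)*m)/(k:ℤ) < (h:ℤ) := by
      rw [Int.ediv_lt_iff_lt_mul hkZ]
      have : (m:ℤ) < (k:ℤ) := by exact_mod_cast hm.2
      nlinarith
    set b : ℤ := ((h:ℤ)*m)/(k:ℤ) with hbdef
    set bt : ℕ := b.toNat with hbt
    have hbtb : (bt:ℤ) = b := Int.toNat_of_nonneg hb0
    have hcond : ∀ n : ℕ, ((k:ℤ)*n < (h:ℤ)*m ∧ n ∈ Ico 1 h) ↔ n ∈ Ico 1 (bt+1) := by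
      intro n
      simp only [mem_Ico]
      have hcomm : (n:ℤ) * k = (k:ℤ) * n := mul_comm _ _
      constructor
      · rintro ⟨hlt, h1, h2⟩
        refine ⟨h1, ?_⟩
        have hzb : (n:ℤ) ≤ b := by
          rw [hbdef, Int.le_ediv_iff_mul_le hkZ]
          omega
        have hzb2 : (n:ℤ) ≤ (bt:ℤ) := by rw [hbtb]; exact hzb
        have : n ≤ bt := by exact_mod_cast hzb2
        omega
      · rintro ⟨h1, h2⟩
        have hnb : (n:ℤ) ≤ b := by
          rw [← hbtb]
          exact_mod_cast (by omega : n ≤ bt)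
        have hle : (n:ℤ) * k ≤ (h:ℤ)*m := by
          rw [← Int.le_ediv_iff_mul_le hkZ]
          exact hnb
        have hne : (k:ℤ)*n ≠ (h:ℤ)*m := by
          intro heq
          have hdvd : (k:ℕ) ∣ h * m := by
            have hz : ((k:ℤ)) ∣ ((h:ℤ)*m) := ⟨n, heq.symm ▸ by ring⟩
            exact_mod_cast Int.natCast_dvd_natCast.mp (by push_cast; exact hz)
          have hkm := (Nat.Coprime.dvd_of_dvd_mul_left (hco.symm) hdvd)
          have := Nat.le_of_dvd (by omega) hkm
          omega
        have hnh : (n:ℤ) < h := lt_of_le_of_lt hnb hbh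
        exact ⟨by omega, h1, by exact_mod_cast hnh⟩
    have hfilter : Finset.filter (fun n : ℕ => (k:ℤ)*n < (h:ℤ)*m) (Ico 1 h) = Ico 1 (bt+1) := by
      ext n
      rw [Finset.mem_filter]
      rw [← hcond n]
      tauto
    rw [← Finset.sum_filter, hfilter]
    have hgs := sum_Ico_id' (bt+1)
    push_cast at hgs
    rw [hbtb] at hgs
    linear_combination hgs
  have claimB : ∀ n ∈ Ico 1 h,
      (∑ m ∈ Ico 1 k, (if (k:ℤ)*n < (h:ℤ)*m then (n:ℤ) else 0))
        = (n:ℤ) * (((k:ℤ)-1) - ((k:ℤ)*n)/(h:ℤ)) := by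
    intro n hn
    simp only [mem_Ico] at hn
    have hc0 : 0 ≤ ((k:ℤ)*n)/(h:ℤ) := Int.ediv_nonneg (by positivity) hhZ.le
    have hck : ((k:ℤ)*n)/(h:ℤ) < (k:ℤ) := by
      rw [Int.ediv_lt_iff_lt_mul hhZ]
      have : (n:ℤ) < (h:ℤ) := by exact_mod_cast hn.2
      nlinarith
    set c : ℤ := ((k:ℤ)*n)/(h:ℤ) with hcdef
    set ct : ℕ := c.toNat with hct
    have hctc : (ct:ℤ) = c := Int.toNat_of_nonneg hc0
    have hcond : ∀ m : ℕ, ((k:ℤ)*n < (h:ℤ)*m ∧ m ∈ Ico 1 k) ↔ m ∈ Ico (ct+1) k := by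
      intro m
      simp only [mem_Ico]
      have hcomm : (m:ℤ) * h = (h:ℤ) * m := mul_comm _ _
      have hiff : (m:ℤ) ≤ c ↔ (h:ℤ)*m ≤ (k:ℤ)*n := by
        rw [hcdef, Int.le_ediv_iff_mul_le hhZ]
        constructor <;> intro hx <;> omega
      constructor
      · rintro ⟨hlt, h1, h2⟩
        have : ¬ ((m:ℤ) ≤ c) := by rw [hiff]; omega
        omega
      · rintro ⟨h1, h2⟩
        have : ¬ ((m:ℤ) ≤ c) := by omega
        rw [hiff] at this
        exact ⟨by omega, by omega, h2⟩
    have hfilter : Finset.filter (fun m : ℕ => (k:ℤ)*n < (h:ℤ)*m) (Ico 1 k) = Ico (ct+1) k := by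
      ext m
      rw [Finset.mem_filter]
      rw [← hcond m]
      tauto
    rw [← Finset.sum_filter, hfilter, Finset.sum_const, Nat.card_Ico, nsmul_eq_mul]
    have hctk : ct + 1 ≤ k := by omega
    have : ((k - (ct+1) : ℕ) : ℤ) = (k:ℤ) - 1 - ct := by omega
    rw [this]
    rw [hctc]
    ring
  have hA : ∑ m ∈ Ico 1 k, (((h:ℤ)*m)/(k:ℤ)) * (((h:ℤ)*m)/(k:ℤ) + 1) = 2 * T := by
    rw [hT, Finset.mul_sum]
    exact Finset.sum_congr rfl (fun m hm => (claimA m hm).symm)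
  have hB : T = ((k:ℤ)-1) * (∑ n ∈ Ico 1 h, (n:ℤ))
      - ∑ n ∈ Ico 1 h, (n:ℤ) * (((k:ℤ)*n)/(h:ℤ)) := by
    rw [hT, Finset.sum_comm]
    rw [Finset.sum_congr rfl claimB]
    rw [Finset.mul_sum, ← Finset.sum_sub_distrib]
    exact Finset.sum_congr rfl (fun n _ => by ring)
  have hg := sum_Ico_id' h
  rw [hA, hB]
  push_cast at hg
  linear_combination ((k:ℤ)-1) * hg

lemma dedekind_recip (h k : ℕ) (hh : 0 < h) (hk : 0 < k) (hco : Nat.Coprime h k) :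
    dedekindS (h:ℤ) k + dedekindS (k:ℤ) h
      = -1/4 + ((h:ℚ)/(k:ℚ) + (k:ℚ)/(h:ℚ) + 1/((h:ℚ)*(k:ℚ)))/12 := by
  have hiso : IsCoprime (h:ℤ) (k:ℤ) := by
    rw [Int.isCoprime_iff_gcd_eq_one]
    simpa [Int.gcd] using hco
  obtain ⟨a, b, hab⟩ := hiso
  have hinv1 : (h:ℤ) * a ≡ 1 [ZMOD (k:ℤ)] :=
    (Int.modEq_iff_dvd.mpr ⟨-b, by linear_combination hab⟩).symm
  have hinv2 : (k:ℤ) * b ≡ 1 [ZMOD (h:ℤ)] :=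
    (Int.modEq_iff_dvd.mpr ⟨-a, by linear_combination hab⟩).symm
  have hinv1' : (h:ℤ) * a ≡ 1 [ZMOD (k:ℤ)] := hinv1
  rw [dedekindS_eq hk hinv1, dedekindS_eq hh hinv2]
  set H : ℤ := (h:ℤ) with hH
  set K : ℤ := (k:ℤ) with hK
  -- integer sums
  have A1 := sum_Ico_sq' k
  have A2 := sum_Ico_sq' h
  have G1 := sum_Ico_id' k
  have e2' : (∑ m ∈ Ico 1 k, ((H * m) % K)^2) = ∑ m ∈ Ico 1 k, (m:ℤ)^2 :=
    sum_emod_perm hinv1 (fun t => t^2)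
  have e5' : (∑ m ∈ Ico 1 k, ((H * m) % K)) = ∑ m ∈ Ico 1 k, (m:ℤ) :=
    sum_emod_perm hinv1 id
  have e3 := e3_lemma h k hh hk hco
  -- expansions via emod_def
  have S2 : (∑ m ∈ Ico 1 k, ((H * m) % K)^2)
      = H^2 * (∑ m ∈ Ico 1 k, (m:ℤ)^2)
        - 2*H*K * (∑ m ∈ Ico 1 k, (m:ℤ) * ((H*m)/K))
        + K^2 * (∑ m ∈ Ico 1 k, ((H*m)/K)^2) := by
    rw [Finset.mul_sum, Finset.mul_sum, Finset.mul_sum, ← Finset.sum_sub_distrib,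
      ← Finset.sum_add_distrib]
    refine Finset.sum_congr rfl fun m _ => ?_
    rw [Int.emod_def]
    ring
  have S0 : (∑ m ∈ Ico 1 k, ((H * m) % K))
      = H * (∑ m ∈ Ico 1 k, (m:ℤ)) - K * (∑ m ∈ Ico 1 k, ((H*m)/K)) := by
    rw [Finset.mul_sum, Finset.mul_sum, ← Finset.sum_sub_distrib]
    refine Finset.sum_congr rfl fun m _ => ?_
    rw [Int.emod_def]
  have SP1 : (∑ m ∈ Ico 1 k, (m:ℤ) * ((H * m) % K))
      = H * (∑ m ∈ Ico 1 k, (m:ℤ)^2) - K * (∑ m ∈ Ico 1 k, (m:ℤ) * ((H*m)/K)) := by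
    rw [Finset.mul_sum, Finset.mul_sum, ← Finset.sum_sub_distrib]
    refine Finset.sum_congr rfl fun m _ => ?_
    rw [Int.emod_def]
    ring
  have SP2 : (∑ n ∈ Ico 1 h, (n:ℤ) * ((K * n) % H))
      = K * (∑ n ∈ Ico 1 h, (n:ℤ)^2) - H * (∑ n ∈ Ico 1 h, (n:ℤ) * ((K*n)/H)) := by
    rw [Finset.mul_sum, Finset.mul_sum, ← Finset.sum_sub_distrib]
    refine Finset.sum_congr rfl fun n _ => ?_
    rw [Int.emod_def]
    ring
  have S3 : (∑ m ∈ Ico 1 k, ((H*m)/K) * (((H*m)/K) + 1))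
      = (∑ m ∈ Ico 1 k, ((H*m)/K)^2) + (∑ m ∈ Ico 1 k, ((H*m)/K)) := by
    rw [← Finset.sum_add_distrib]
    refine Finset.sum_congr rfl fun m _ => ?_
    ring
  -- assembled equations
  have A3 : H^2 * (∑ m ∈ Ico 1 k, (m:ℤ)^2)
      - 2*H*K * (∑ m ∈ Ico 1 k, (m:ℤ) * ((H*m)/K))
      + K^2 * (∑ m ∈ Ico 1 k, ((H*m)/K)^2) = ∑ m ∈ Ico 1 k, (m:ℤ)^2 :=
    S2.symm.trans e2'
  have A4 : (∑ m ∈ Ico 1 k, ((H*m)/K)^2) + (∑ m ∈ Ico 1 k, ((H*m)/K))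
      = (K-1)*H*(H-1) - 2 * (∑ n ∈ Ico 1 h, (n:ℤ) * ((K*n)/H)) :=
    S3.symm.trans e3
  have A5 : H * (∑ m ∈ Ico 1 k, (m:ℤ)) - K * (∑ m ∈ Ico 1 k, ((H*m)/K))
      = ∑ m ∈ Ico 1 k, (m:ℤ) := S0.symm.trans e5'
  have dagger : 12*H^2*(∑ m ∈ Ico 1 k, (m:ℤ) * ((H * m) % K))
      + 12*K^2*(∑ n ∈ Ico 1 h, (n:ℤ) * ((K * n) % H))
      = H*K*(H^2+K^2+1) + 3*H^2*K^2*(H+K) - 9*H^2*K^2 := by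
    linear_combination (H^3+H)*A1 + 2*K^3*A2 + 6*H*A3 + (-6*H*K^2)*A4 + (-6*H*K)*A5
      + 3*H*K*(H-1)*G1 + 12*H^2*SP1 + 12*K^2*SP2
  -- finish over ℚ
  have hhQ : ((h:ℚ)) ≠ 0 := by positivity
  have hkQ : ((k:ℚ)) ≠ 0 := by positivity
  have dQ := congrArg (fun t : ℤ => (t:ℚ)) dagger
  push_cast at dQ
  field_simp
  push_cast at dQ ⊢
  linear_combination (4:ℚ) * dQ

lemma inv_emod_emod {h h' : ℤ} {k : ℕ} (hinv : h * h' ≡ 1 [ZMOD (k:ℤ)])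
    {m : ℕ} (hm : m ∈ Ico 1 k) : (h' * ((h * m) % (k:ℤ))) % (k:ℤ) = m := by
  rw [(emod_mem_aux hinv hm).2.symm] -- no-op cosmetic; keep structure
  rw [(emod_mem_aux hinv hm).2]
  have h0 : ((h * m) % (k:ℤ)) ≡ h * m [ZMOD (k:ℤ)] := Int.emod_emod_of_dvd _ dvd_rfl
  have h1 : h' * ((h * m) % (k:ℤ)) ≡ h' * (h * m) [ZMOD (k:ℤ)] := h0.mul_left h'
  have h2 : h' * (h * m) ≡ 1 * m [ZMOD (k:ℤ)] := by
    calc h' * (h * m) = (h * h') * m := by ring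
    _ ≡ 1 * m [ZMOD (k:ℤ)] := hinv.mul_right m
  have h3 : h' * ((h * m) % (k:ℤ)) ≡ m [ZMOD (k:ℤ)] := h1.trans (by simpa using h2)
  simp only [mem_Ico] at hm
  rw [Int.ModEq] at h3
  rw [h3, Int.emod_eq_of_lt (by exact_mod_cast Nat.zero_le m) (by exact_mod_cast hm.2)]

lemma dedekindS_inv {h h' : ℤ} {k : ℕ} (hk : 0 < k) (hinv : h * h' ≡ 1 [ZMOD (k:ℤ)]) :
    dedekindS h' k = dedekindS h k := by
  have hinv' : h' * h ≡ 1 [ZMOD (k:ℤ)] := by rwa [mul_comm] at hinv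
  rw [dedekindS_eq hk hinv', dedekindS_eq hk hinv]
  congr 1
  congr 1
  have key := sum_emod_perm hinv (fun t => t * ((h' * t) % (k:ℤ)))
  rw [← key]
  refine congrArg _ (Finset.sum_congr rfl fun m hm => ?_)
  rw [inv_emod_emod hinv hm, mul_comm]

lemma dedekindS_neg {h h' : ℤ} {k : ℕ} (hk : 0 < k) (hinv : h * h' ≡ 1 [ZMOD (k:ℤ)]) :
    dedekindS (-h) k = - dedekindS h k := by
  have hinvneg : (-h) * (-h') ≡ 1 [ZMOD (k:ℤ)] := by rwa [neg_mul_neg]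
  rw [dedekindS_eq hk hinvneg, dedekindS_eq hk hinv]
  have hterm : ∀ m ∈ Ico 1 k, ((-h) * (m:ℕ) : ℤ) % (k:ℤ) = (k:ℤ) - ((h * m) % (k:ℤ)) := by
    intro m hm
    have hmem := emod_mem_aux hinv hm
    simp only [mem_Ico] at hmem
    have h1 : ((-h) * (m:ℕ) : ℤ) % (k:ℤ) = (-(h * m)) % (k:ℤ) := by ring_nf
    have hr1 : 1 ≤ (h * m) % (k:ℤ) := by omega
    have hr2 : (h * m) % (k:ℤ) < (k:ℤ) := by omega
    have c1 : (0:ℤ) ≤ (k:ℤ) - (h * m) % (k:ℤ) := by omega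
    have c2 : (k:ℤ) - (h * m) % (k:ℤ) < (k:ℤ) := by omega
    have hmm : ((h * m) % (k:ℤ)) ≡ h * m [ZMOD (k:ℤ)] := Int.emod_emod_of_dvd _ dvd_rfl
    have hmod : ((k:ℤ) - h*m) % (k:ℤ) = ((k:ℤ) - (h*m) % (k:ℤ)) % (k:ℤ) :=
      (Int.ModEq.refl (k:ℤ)).sub hmm.symm
    rw [h1, Int.neg_emod_eq_sub_emod, hmod, Int.emod_eq_of_lt c1 c2]
  have hsum : (∑ m ∈ Ico 1 k, (m:ℤ) * (((-h) * m) % (k:ℤ)))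
      = (k:ℤ) * (∑ m ∈ Ico 1 k, (m:ℤ)) - ∑ m ∈ Ico 1 k, (m:ℤ) * ((h * m) % (k:ℤ)) := by
    rw [Finset.mul_sum, ← Finset.sum_sub_distrib]
    refine Finset.sum_congr rfl fun m hm => ?_
    rw [hterm m hm]
    ring
  rw [hsum]
  have hg := sum_Ico_id' k
  have hgQ := congrArg (fun t : ℤ => (t:ℚ)) hg
  push_cast at hgQ
  push_cast
  have hkQ : ((k:ℚ)) ≠ 0 := by positivity
  field_simp
  linear_combination (2*(k:ℚ)) * hgQ

theorem stmt_12 (x y z w : ℤ) (hdet : x * w - y * z = 1) (hz : z ≠ 0)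
    (htr : 2 < x + w) (hx : 0 < x) :
    nMat !![x, y; z, w] = nMat (!![3, -1; 1, 0] * !![x, y; z, w]) := by
  have hM' : (!![3, -1; 1, 0] * !![x, y; z, w] : Matrix (Fin 2) (Fin 2) ℤ)
      = !![3*x - z, 3*y - w; x, y] := by
    ext i j
    fin_cases i <;> fin_cases j <;>
      simp [Matrix.mul_apply, Fin.sum_univ_succ] <;> ring
  rw [hM']
  have E1 : ∀ a b c d : ℤ, (!![a, b; c, d] : Matrix (Fin 2) (Fin 2) ℤ) 0 0 = a := fun _ _ _ _ => rfl
  have E2 : ∀ a b c d : ℤ, (!![a, b; c, d] : Matrix (Fin 2) (Fin 2) ℤ) 1 0 = c := fun _ _ _ _ => rfl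
  have E3 : ∀ a b c d : ℤ, (!![a, b; c, d] : Matrix (Fin 2) (Fin 2) ℤ) 1 1 = d := fun _ _ _ _ => rfl
  simp only [nMat, E1, E2, E3]
  set a : ℕ := z.natAbs with ha
  set xa : ℕ := x.natAbs with hxa
  have hxaZ : (xa : ℤ) = x := Int.natAbs_of_nonneg hx.le
  have hapos : 0 < a := Int.natAbs_pos.mpr hz
  have hxapos : 0 < xa := Int.natAbs_pos.mpr hx.ne'
  have hsx : ((Int.sign x : ℤ) : ℚ) = 1 := by rw [Int.sign_eq_one_of_pos hx]; norm_num
  have hdvd_az : ((a:ℤ)) ∣ z := Int.natAbs_dvd.mpr dvd_rfl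
  obtain ⟨c, hc⟩ := hdvd_az
  have hinv_w : x * w ≡ 1 [ZMOD (a:ℤ)] :=
    Int.modEq_iff_dvd.mpr ⟨-y*c, by linear_combination -hdet - y*hc⟩
  have hinv_y : (-z) * y ≡ 1 [ZMOD (xa:ℤ)] :=
    Int.modEq_iff_dvd.mpr ⟨w, by linear_combination -hdet - w*hxaZ⟩
  have hinv_z : z * (-y) ≡ 1 [ZMOD (xa:ℤ)] :=
    Int.modEq_iff_dvd.mpr ⟨w, by linear_combination -hdet - w*hxaZ⟩
  have hco : Nat.Coprime a xa := by
    have hic : IsCoprime z x := ⟨-y, w, by linear_combination hdet⟩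
    have h2 : Int.gcd z x = 1 := Int.isCoprime_iff_gcd_eq_one.mp hic
    exact h2
  have hrec := dedekind_recip a xa hapos hxapos hco
  have hew : dedekindS w a = dedekindS ((xa:ℤ)) a := by
    have h1 : dedekindS w a = dedekindS x a := dedekindS_inv hapos hinv_w
    rw [h1, ← hxaZ]
  have hdetQ : (x:ℚ)*(w:ℚ) - (y:ℚ)*(z:ℚ) = 1 := by exact_mod_cast hdet
  have hxQ : ((xa:ℕ):ℚ) = (x:ℚ) := by exact_mod_cast hxaZ
  have hxQ0 : (x:ℚ) ≠ 0 := by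
    have : (0:ℚ) < (x:ℚ) := by exact_mod_cast hx
    exact this.ne'
  rw [hxQ] at hrec
  have haQ0 : ((a:ℕ):ℚ) ≠ 0 := by
    have : (0:ℚ) < ((a:ℕ):ℚ) := by exact_mod_cast hapos
    exact this.ne'
  have hrec2 : 12*((a:ℕ):ℚ)*(x:ℚ)*(dedekindS ((a:ℤ)) xa + dedekindS ((xa:ℤ)) a)
      = -3*(((a:ℕ):ℚ)*(x:ℚ)) + ((a:ℕ):ℚ)^2 + (x:ℚ)^2 + 1 := by
    rw [hrec]
    field_simp
    ring
  rcases lt_or_gt_of_ne hz with hzneg | hzpos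
  · -- z < 0
    have haZ : (a:ℤ) = -z := Int.ofNat_natAbs_of_nonpos hzneg.le
    have haQ : ((a:ℕ):ℚ) = -(z:ℚ) := by exact_mod_cast haZ
    have hsz : ((Int.sign z : ℤ) : ℚ) = -1 := by
      rw [Int.sign_eq_neg_one_of_neg hzneg]; norm_num
    have hinv_y2 : ((a:ℤ)) * y ≡ 1 [ZMOD (xa:ℤ)] := by rw [haZ]; exact hinv_y
    have hey : dedekindS y xa = dedekindS ((a:ℤ)) xa := dedekindS_inv hxapos hinv_y2
    rw [hew, hey, hsz, hsx]
    rw [haQ] at hrec2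
    have hzQ0 : (z:ℚ) ≠ 0 := by
      have : (z:ℚ) < 0 := by exact_mod_cast hzneg
      exact this.ne
    push_cast
    field_simp
    linear_combination (-1)*hrec2 + hdetQ
  · -- z > 0
    have haZ : (a:ℤ) = z := Int.natAbs_of_nonneg hzpos.le
    have haQ : ((a:ℕ):ℚ) = (z:ℚ) := by exact_mod_cast haZ
    have hsz : ((Int.sign z : ℤ) : ℚ) = 1 := by
      rw [Int.sign_eq_one_of_pos hzpos]; norm_num
    have hey : dedekindS y xa = - dedekindS ((a:ℤ)) xa := by
      have h1 : dedekindS y xa = dedekindS (-z) xa := dedekindS_inv hxapos hinv_y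
      have h2 : dedekindS (-z) xa = - dedekindS z xa := dedekindS_neg hxapos hinv_z
      rw [h1, h2, haZ]
    rw [hew, hey, hsz, hsx]
    rw [haQ] at hrec2
    have hzQ0 : (z:ℚ) ≠ 0 := by
      have : (0:ℚ) < (z:ℚ) := by exact_mod_cast hzpos
      exact this.ne'
    push_cast
    field_simp
    linear_combination (-1)*hrec2 + hdetQ
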